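/- If X is a visible mixed object (of the form m(X₀)) and Ỹ = (Y₁,Y₂,Ψ₁,Ψ₂) is any mixed object, then the map Hom_{mC}(X, Ỹ) → Hom_C(X₀, Y₂) sending (f₁,f₂) to f₂ is a bijection, natural in X and Ỹ. -/

import Mathlib

open CategoryTheory CategoryTheory.Limits

universe v u

variable {C : Type u} [Category.{v} C]

/-- The twisted category `tC` attached to a category `C` with an endomorphism `F` of the
identity functor: objects are pairs `(X, Φ)` with `Φ ≫ Φ = F.app X`. -/
structure Twisted (C : Type u) [Category.{v} C] (F : 𝟭 C ⟶ 𝟭 C) where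
  X : C
  tw : X ⟶ X
  tw_tw : tw ≫ tw = F.app X

namespace Twisted

variable {F : 𝟭 C ⟶ 𝟭 C}

instance : Category (Twisted C F) where
  Hom A B := { f : A.X ⟶ B.X // A.tw ≫ f = f ≫ B.tw }
  id A := ⟨𝟙 A.X, by simp⟩
  comp {A B D} f g := ⟨f.1 ≫ g.1, by
    rw [← Category.assoc, f.2, Category.assoc, g.2, ← Category.assoc]⟩
  id_comp f := Subtype.ext (Category.id_comp _)
  comp_id f := Subtype.ext (Category.comp_id _)
  assoc f g h := Subtype.ext (Category.assoc _ _ _)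

end Twisted

/-- The mixed category `mC`: objects are quadruples `(X₁, X₂, φ₁, φ₂)` with
`φ₁ ≫ φ₂ = F.app X₁` and `φ₂ ≫ φ₁ = F.app X₂`. -/
structure Mixed (C : Type u) [Category.{v} C] (F : 𝟭 C ⟶ 𝟭 C) where
  X₁ : C
  X₂ : C
  φ₁ : X₁ ⟶ X₂
  φ₂ : X₂ ⟶ X₁
  h₁ : φ₁ ≫ φ₂ = F.app X₁
  h₂ : φ₂ ≫ φ₁ = F.app X₂

namespace Mixed

variable {F : 𝟭 C ⟶ 𝟭 C}

instance : Category (Mixed C F) where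
  Hom A B := { p : (A.X₁ ⟶ B.X₁) × (A.X₂ ⟶ B.X₂) //
      A.φ₁ ≫ p.2 = p.1 ≫ B.φ₁ ∧ A.φ₂ ≫ p.1 = p.2 ≫ B.φ₂ }
  id A := ⟨(𝟙 _, 𝟙 _), by simp⟩
  comp {A B D} f g := ⟨(f.1.1 ≫ g.1.1, f.1.2 ≫ g.1.2), by
    constructor
    · rw [← Category.assoc, f.2.1, Category.assoc, g.2.1, ← Category.assoc]
    · rw [← Category.assoc, f.2.2, Category.assoc, g.2.2, ← Category.assoc]⟩
  id_comp f := Subtype.ext (Prod.ext_iff.mpr ⟨Category.id_comp _, Category.id_comp _⟩)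
  comp_id f := Subtype.ext (Prod.ext_iff.mpr ⟨Category.comp_id _, Category.comp_id _⟩)
  assoc f g h := Subtype.ext (Prod.ext_iff.mpr ⟨Category.assoc _ _ _, Category.assoc _ _ _⟩)

end Mixed

/-- The first component functor `comp₁ : mC ⥤ C`. -/
def comp₁ (F : 𝟭 C ⟶ 𝟭 C) : Mixed C F ⥤ C where
  obj A := A.X₁
  map f := f.1.1
  map_id _ := rfl
  map_comp _ _ := rfl

/-- The second component functor `comp₂ : mC ⥤ C`. -/
def comp₂ (F : 𝟭 C ⟶ 𝟭 C) : Mixed C F ⥤ C where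
  obj A := A.X₂
  map f := f.1.2
  map_id _ := rfl
  map_comp _ _ := rfl

/-- The mixing functor `m : C ⥤ mC`, `X ↦ (X, X, F_X, id_X)`. -/
def mixM (F : 𝟭 C ⟶ 𝟭 C) : C ⥤ Mixed C F where
  obj X := ⟨X, X, F.app X, 𝟙 X, by simp, by simp⟩
  map {X Y} f := ⟨(f, f), by
    constructor
    · simpa using (F.naturality f).symm
    · simp⟩
  map_id _ := rfl
  map_comp _ _ := rfl

/-- The anti-mixing functor `m̄ : C ⥤ mC`, `X ↦ (X, X, id_X, F_X)`. -/
def mixMbar (F : 𝟭 C ⟶ 𝟭 C) : C ⥤ Mixed C F where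
  obj X := ⟨X, X, 𝟙 X, F.app X, by simp, by simp⟩
  map {X Y} f := ⟨(f, f), by
    constructor
    · simp
    · simpa using (F.naturality f).symm⟩
  map_id _ := rfl
  map_comp _ _ := rfl

/-- The twisting functor `τ* : mC ⥤ mC`, swapping the two halves of a mixed object. -/
def tau (F : 𝟭 C ⟶ 𝟭 C) : Mixed C F ⥤ Mixed C F where
  obj A := ⟨A.X₂, A.X₁, A.φ₂, A.φ₁, A.h₂, A.h₁⟩
  map f := ⟨(f.1.2, f.1.1), ⟨f.2.2, f.2.1⟩⟩
  map_id _ := rfl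
  map_comp _ _ := rfl

/-- The twixing functor `δ* : tC ⥤ mC`, `(X, Φ) ↦ (X, X, Φ, Φ)`. -/
def deltaStar (F : 𝟭 C ⟶ 𝟭 C) : Twisted C F ⥤ Mixed C F where
  obj A := ⟨A.X, A.X, A.tw, A.tw, A.tw_tw, A.tw_tw⟩
  map f := ⟨(f.1, f.1), ⟨f.2, f.2⟩⟩
  map_id _ := rfl
  map_comp _ _ := rfl

/-- If `X = m X₀` is a visible mixed object and `Ỹ` is any mixed object, then
`Hom_{mC}(m X₀, Ỹ) → Hom_C(X₀, Y₂)`, `(f₁, f₂) ↦ f₂`, is a bijection, natural in both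
variables. -/
theorem visible_hom_bijective {C : Type u} [Category.{v} C] (F : 𝟭 C ⟶ 𝟭 C)
    (X₀ : C) (Yt : Mixed C F) :
    Function.Bijective (fun f : (mixM F).obj X₀ ⟶ Yt => f.1.2) ∧
    (∀ (X₀' : C) (g : X₀' ⟶ X₀) (f : (mixM F).obj X₀ ⟶ Yt),
      ((mixM F).map g ≫ f).1.2 = g ≫ f.1.2) ∧
    (∀ (Yt' : Mixed C F) (h : Yt ⟶ Yt') (f : (mixM F).obj X₀ ⟶ Yt),
      (f ≫ h).1.2 = f.1.2 ≫ h.1.2) := by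
  refine ⟨⟨?_, ?_⟩, fun _ _ _ => rfl, fun _ _ _ => rfl⟩
  · intro f g hfg
    simp only at hfg
    apply Subtype.ext
    have h1 : f.1.1 = f.1.2 ≫ Yt.φ₂ := by simpa [mixM, eq_comm] using f.2.2
    have h2 : g.1.1 = g.1.2 ≫ Yt.φ₂ := by simpa [mixM, eq_comm] using g.2.2
    exact Prod.ext (by rw [h1, h2, hfg]) hfg
  · intro g
    refine ⟨⟨(g ≫ Yt.φ₂, g), ?_, by simp [mixM]⟩, rfl⟩
    show F.app X₀ ≫ g = (g ≫ Yt.φ₂) ≫ Yt.φ₁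
    rw [Category.assoc, Yt.h₂]
    exact (F.naturality g).symm
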